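/- Let n ≥ 2, let z be a unit vector in V_{n,m} and y a unit vector in V_{n,l} with m > l. Suppose there exist integers α, β ≥ 1 with d := αm = βl, an integer 1 ≤ a ≤ d−1, and unit vectors z₁ ∈ V_{n,a}, z₂ ∈ V_{n,d−a} such that z^{⊗α} = z₁ ⊗ z₂ and y^{⊗β} = z₂ ⊗ z₁. Then z is periodic. -/

import Mathlib

noncomputable section

/-- `Vnm n m` is the Hilbert space `ℓ²({1,…,n}^m)`, identified with `(ℂ^n)^{⊗m}`. -/
abbrev Vnm (n m : ℕ) : Type := EuclideanSpace ℂ (Fin m → Fin n)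

/-- The tensor product `x ⊗ y`, via `(x ⊗ y)_{JK} = x_J y_K`. -/
def tensV {n m l : ℕ} (x : Vnm n m) (y : Vnm n l) : Vnm n (m + l) :=
  WithLp.toLp 2 (fun J => x (fun i => J (Fin.castAdd l i)) * y (fun i => J (Fin.natAdd m i)))

/-- Re-indexing of a tensor along an equality of lengths. -/
def castV {n m m' : ℕ} (h : m = m') (z : Vnm n m) : Vnm n m' :=
  WithLp.toLp 2 (fun J => z (fun i => J (Fin.cast h i)))

/-- The tensor power `x^{⊗p}`. -/
def tpowV {n m : ℕ} (x : Vnm n m) (p : ℕ) : Vnm n (p * m) :=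
  WithLp.toLp 2 (fun J => ∏ i : Fin p, x (fun t => J ⟨(i : ℕ) * m + (t : ℕ), by
    have h2 : (t : ℕ) < m := t.isLt
    have h1 : (i : ℕ) + 1 ≤ p := i.isLt
    have h3 : ((i : ℕ) + 1) * m = (i : ℕ) * m + m := by ring
    have h4 : ((i : ℕ) + 1) * m ≤ p * m := Nat.mul_le_mul_right m h1
    omega⟩))

/-- The coordinatewise complex conjugate. -/
def conjV {n m : ℕ} (z : Vnm n m) : Vnm n m := WithLp.toLp 2 (fun J => starRingEnd ℂ (z J))

/-- A unit vector `z` is periodic if `z = x^{⊗p}` for some unit vector `x` and `p ≥ 2`;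
it is nonperiodic if it is not periodic. -/
def PeriodicV {n m : ℕ} (z : Vnm n m) : Prop :=
  ∃ (m' p : ℕ) (x : Vnm n m') (h : p * m' = m),
    ‖x‖ = 1 ∧ 2 ≤ p ∧ castV h (tpowV x p) = z

/-- The matricization of `z ∈ V_{n,b+a}` as an operator `V_{n,a} → V_{n,b}`,
`(T z) e_K = Σ_{|J|=b} z_{JK} e_J`. -/
def matT {n b a : ℕ} (z : Vnm n (b + a)) :
    EuclideanSpace ℂ (Fin a → Fin n) →L[ℂ] EuclideanSpace ℂ (Fin b → Fin n) :=
  LinearMap.toContinuousLinearMap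
    (Matrix.toEuclideanLin
      (Matrix.of fun (J : Fin b → Fin n) (K : Fin a → Fin n) => z (Fin.append J K)))

/-- The matricization `T_a(z) : V_{n,a} → V_{n,m-a}` of `z ∈ V_{n,m}`,
`T_a(z) e_K = Σ_{|J|=m−a} z_{JK} e_J`. -/
def Tmat {n m : ℕ} (a : ℕ) (h : a ≤ m) (z : Vnm n m) :
    EuclideanSpace ℂ (Fin a → Fin n) →L[ℂ] EuclideanSpace ℂ (Fin (m - a) → Fin n) :=
  matT (castV (by omega : m = (m - a) + a) z)

/-- `z` is indecomposable if it is not a tensor product of lower-degree tensors. -/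
def IndecomposableV {n m : ℕ} (z : Vnm n m) : Prop :=
  1 ≤ m ∧ ¬ ∃ (a b : ℕ) (h : a + b = m) (x : Vnm n a) (y : Vnm n b),
    1 ≤ a ∧ 1 ≤ b ∧ castV h (tensV x y) = z

/-- The iterated tensor product `x₁ ⊗ ⋯ ⊗ x_l` of homogeneous tensors of degrees `ms i`. -/
def bigTensV {n l : ℕ} (ms : Fin l → ℕ) (xs : ∀ i, Vnm n (ms i)) : Vnm n (∑ i, ms i) :=
  WithLp.toLp 2 (fun J => ∏ i : Fin l, xs i (fun t => J ⟨(∑ j ∈ Finset.Iio i, ms j) + (t : ℕ), by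
    have h1 : (∑ j ∈ Finset.Iio i, ms j) + ms i ≤ ∑ j, ms j := by
      calc (∑ j ∈ Finset.Iio i, ms j) + ms i
          = ∑ j ∈ insert i (Finset.Iio i), ms j := by
            rw [Finset.sum_insert (by simp)]; ring
        _ ≤ ∑ j, ms j := Finset.sum_le_sum_of_subset (Finset.subset_univ _)
    have h2 : (t : ℕ) < ms i := t.isLt
    omega⟩))

/-- `z ⊠ y ∈ V_{nn',m}`: `(z ⊠ y)_L = z_J y_K` where `L = J ⊠ K` is given by the
pairing `l_t = n'·j_t + k_t` of `{0,…,n−1}×{0,…,n'−1}` with `{0,…,nn'−1}`. -/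
def boxTensV {n n' m : ℕ} (z : Vnm n m) (y : Vnm n' m) : Vnm (n * n') m :=
  WithLp.toLp 2 (fun L =>
    z (fun t => ⟨(L t : ℕ) / n', by
        have h := (L t).isLt
        have hn' : 0 < n' := Nat.pos_of_ne_zero (by rintro rfl; simp at h)
        exact (Nat.div_lt_iff_lt_mul hn').mpr h⟩) *
    y (fun t => ⟨(L t : ℕ) % n', by
        have h := (L t).isLt
        have hn' : 0 < n' := Nat.pos_of_ne_zero (by rintro rfl; simp at h)
        exact Nat.mod_lt _ hn'⟩))

/-- `z * y := z^{⊗α} ⊠ y^{⊗β} ∈ V_{nn',d}` where `d = αm = βl` is the lcm of `m` and `l`. -/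
def starV {n n' m l : ℕ} (z : Vnm n m) (y : Vnm n' l) : Vnm (n * n') (Nat.lcm m l) :=
  boxTensV (castV (Nat.div_mul_cancel (Nat.dvd_lcm_left m l)) (tpowV z (Nat.lcm m l / m)))
    (castV (Nat.div_mul_cancel (Nat.dvd_lcm_right m l)) (tpowV y (Nat.lcm m l / l)))

/-- Conjugacy of homogeneous tensors: `z = y`, or `z = x₁ ⊗ x₂` and `y = x₂ ⊗ x₁`
for some unit vectors `x₁, x₂`. -/
def ConjVec {n m l : ℕ} (z : Vnm n m) (y : Vnm n l) : Prop :=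
  (∃ h : m = l, castV h z = y) ∨
    ∃ (a b : ℕ) (x₁ : Vnm n a) (x₂ : Vnm n b) (h₁ : a + b = m) (h₂ : b + a = l),
      ‖x₁‖ = 1 ∧ ‖x₂‖ = 1 ∧ castV h₁ (tensV x₁ x₂) = z ∧ castV h₂ (tensV x₂ x₁) = y

/-- A Cuntz family of order `n` on `H`: `Sᵢ* Sⱼ = δᵢⱼ 1` and `Σᵢ Sᵢ Sᵢ* = 1`. -/
def IsCuntzFamily {H : Type*} [NormedAddCommGroup H] [InnerProductSpace ℂ H]
    [CompleteSpace H] {n : ℕ} (S : Fin n → H →L[ℂ] H) : Prop :=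
  (∀ i j, (ContinuousLinearMap.adjoint (S i)).comp (S j) = if i = j then 1 else 0) ∧
    ∑ i, (S i).comp (ContinuousLinearMap.adjoint (S i)) = 1

/-- `S_J := S_{j₁} ∘ ⋯ ∘ S_{j_k}` for a word `J = (j₁,…,j_k)`, with `S_∅ = 1`. -/
def Sword {H : Type*} [NormedAddCommGroup H] [InnerProductSpace ℂ H]
    {ι : Type*} (S : ι → H →L[ℂ] H) : (k : ℕ) → (Fin k → ι) → (H →L[ℂ] H)
  | 0, _ => 1
  | (k + 1), J => (S (J 0)).comp (Sword S k (fun i => J i.succ))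

/-- `s(z) := Σ_{|J|=m} z_J S_J`. -/
def sop {H : Type*} [NormedAddCommGroup H] [InnerProductSpace ℂ H]
    {n m : ℕ} (S : Fin n → H →L[ℂ] H) (z : Vnm n m) : H →L[ℂ] H :=
  ∑ J : Fin m → Fin n, z J • Sword S m J



/- ===== Auxiliary framework for the proof ===== -/

section AuxFramework

open Finset

variable {n : ℕ}

/-- Default element of `Fin n` when `n ≠ 0`. -/
private def dflt [NeZero n] : Fin n := ⟨0, Nat.pos_of_ne_zero (NeZero.ne n)⟩

/-- Extend a finite word to an infinite one. -/
def extJ [NeZero n] {N : ℕ} (K : Fin N → Fin n) : ℕ → Fin n :=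
  fun i => if h : i < N then K ⟨i, h⟩ else dflt

/-- The value of the cylinder function of `z` at offset `t` on the infinite word `J`. -/
def Zv {m : ℕ} (z : Vnm n m) (t : ℕ) (J : ℕ → Fin n) : ℂ :=
  z (fun i => J (t + (i : ℕ)))

/-- The cylinder value of the `k`-th tensor power of `x` at offset `t`. -/
def ZP {g : ℕ} (x : Vnm n g) (k t : ℕ) (J : ℕ → Fin n) : ℂ :=
  ∏ i ∈ Finset.range k, Zv x (t + i * g) J

/-- Splice two infinite words at position `r`. -/
def spliceJ (r : ℕ) (K J : ℕ → Fin n) : ℕ → Fin n :=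
  fun i => if i < r then K i else J (i - r)

lemma Zv_extJ [NeZero n] {N : ℕ} (z : Vnm n N) (K : Fin N → Fin n) :
    Zv z 0 (extJ K) = z K := by
  unfold Zv extJ
  apply congrArg
  funext i
  simp [i.isLt]

lemma Zv_congrJ {m : ℕ} (z : Vnm n m) {t : ℕ} {J J' : ℕ → Fin n}
    (h : ∀ i, i < m → J (t + i) = J' (t + i)) : Zv z t J = Zv z t J' := by
  unfold Zv; apply congrArg; funext i; exact h i i.isLt

lemma Zv_zero {m : ℕ} (t : ℕ) (J : ℕ → Fin n) : Zv (0 : Vnm n m) t J = 0 := rfl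

lemma Zv_smul {m : ℕ} (c : ℂ) (z : Vnm n m) (t : ℕ) (J : ℕ → Fin n) :
    Zv (c • z) t J = c * Zv z t J := rfl

lemma Zv_castV {m m' : ℕ} (h : m = m') (z : Vnm n m) (t : ℕ) (J : ℕ → Fin n) :
    Zv (castV h z) t J = Zv z t J := by
  subst h; rfl

lemma Zv_off {m : ℕ} (z : Vnm n m) {t t' : ℕ} (h : t = t') (J : ℕ → Fin n) :
    Zv z t J = Zv z t' J := by rw [h]

lemma Zv_tensV {m l : ℕ} (x : Vnm n m) (y : Vnm n l) (t : ℕ) (J : ℕ → Fin n) :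
    Zv (tensV x y) t J = Zv x t J * Zv y (t + m) J := by
  unfold Zv tensV
  dsimp only
  congr 1
  all_goals
    apply congrArg
    funext i
    exact congrArg J (by simp only [Fin.coe_castAdd, Fin.coe_natAdd]; omega)

lemma Zv_tpowV {g : ℕ} (x : Vnm n g) (k t : ℕ) (J : ℕ → Fin n) :
    Zv (tpowV x k) t J = ZP x k t J := by
  unfold Zv tpowV ZP
  dsimp only
  rw [← Fin.prod_univ_eq_prod_range (fun i => Zv x (t + i * g) J) k]
  apply Finset.prod_congr rfl
  intro i _
  show x (fun s => J (t + ((i : ℕ) * g + (s : ℕ)))) = Zv x (t + (i : ℕ) * g) J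
  unfold Zv
  apply congrArg
  funext s
  congr 1
  omega

lemma Zv_degzero {M : ℕ} (hM : M = 0) (w : Vnm n M) (t t' : ℕ) (J J' : ℕ → Fin n) :
    Zv w t J = Zv w t' J' := by
  unfold Zv
  apply congrArg
  funext i
  exact absurd i.isLt (by omega)

lemma Zv_splice_lo {m : ℕ} (z : Vnm n m) {t r : ℕ} (h : t + m ≤ r) (K J : ℕ → Fin n) :
    Zv z t (spliceJ r K J) = Zv z t K := by
  apply Zv_congrJ
  intro i hi
  simp only [spliceJ]
  rw [if_pos (by omega)]

lemma Zv_splice_hi {m : ℕ} (z : Vnm n m) {t r : ℕ} (h : r ≤ t) (K J : ℕ → Fin n) :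
    Zv z t (spliceJ r K J) = Zv z (t - r) J := by
  unfold Zv
  apply congrArg
  funext i
  simp only [spliceJ]
  rw [if_neg (by omega)]
  congr 1
  omega

lemma vnm_ext [NeZero n] {m : ℕ} {u v : Vnm n m} (h : ∀ J, Zv u 0 J = Zv v 0 J) :
    u = v := by
  ext K
  have := h (extJ K)
  rwa [Zv_extJ, Zv_extJ] at this

lemma vnm_eq_zero [NeZero n] {m : ℕ} {u : Vnm n m} (h : ∀ J, Zv u 0 J = 0) : u = 0 :=
  vnm_ext (fun J => by rw [h J, Zv_zero])

lemma exists_Zv_ne [NeZero n] {m : ℕ} {u : Vnm n m} (h : u ≠ 0) :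
    ∃ J, Zv u 0 J ≠ 0 := by
  by_contra hc
  push_neg at hc
  exact h (vnm_eq_zero hc)

lemma ne_zero_of_Zv [NeZero n] {m : ℕ} {u : Vnm n m} {J : ℕ → Fin n} {t : ℕ}
    (h : Zv u t J ≠ 0) : u ≠ 0 := by
  rintro rfl
  exact h (Zv_zero t J)

/- ZP lemmas -/

lemma ZP_one {g : ℕ} (x : Vnm n g) (t : ℕ) (J : ℕ → Fin n) :
    ZP x 1 t J = Zv x t J := by
  simp [ZP]

lemma ZP_off {g : ℕ} (x : Vnm n g) {k k' t t' : ℕ} (hk : k = k') (ht : t = t')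
    (J : ℕ → Fin n) : ZP x k t J = ZP x k' t' J := by rw [hk, ht]

lemma ZP_add {g : ℕ} (x : Vnm n g) (k₁ k₂ t : ℕ) (J : ℕ → Fin n) :
    ZP x (k₁ + k₂) t J = ZP x k₁ t J * ZP x k₂ (t + k₁ * g) J := by
  unfold ZP
  rw [Finset.prod_range_add]
  congr 1
  apply Finset.prod_congr rfl
  intro i _
  apply Zv_off
  rw [Nat.add_mul]
  omega

lemma ZP_succ_front {g : ℕ} (x : Vnm n g) (k t : ℕ) (J : ℕ → Fin n) :
    ZP x (k + 1) t J = Zv x t J * ZP x k (t + g) J := by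
  rw [show k + 1 = 1 + k by omega, ZP_add, ZP_one]
  congr 2
  omega

lemma ZP_succ_back {g : ℕ} (x : Vnm n g) (k t : ℕ) (J : ℕ → Fin n) :
    ZP x (k + 1) t J = ZP x k t J * Zv x (t + k * g) J := by
  unfold ZP
  rw [Finset.prod_range_succ]

lemma ZP_restep {g g' : ℕ} (h : g = g') (x : Vnm n g) (k t : ℕ) (J : ℕ → Fin n) :
    ZP x k t J = ∏ i ∈ Finset.range k, Zv x (t + i * g') J := by
  subst h; rfl

lemma ZP_castV {g g' : ℕ} (h : g = g') (x : Vnm n g) (k t : ℕ) (J : ℕ → Fin n) :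
    ZP (castV h x) k t J = ZP x k t J := by
  subst h
  unfold ZP
  exact Finset.prod_congr rfl (fun i _ => Zv_castV rfl x _ J)

lemma ZP_smul {g : ℕ} (c : ℂ) (x : Vnm n g) (k t : ℕ) (J : ℕ → Fin n) :
    ZP (c • x) k t J = c ^ k * ZP x k t J := by
  unfold ZP
  calc ∏ i ∈ Finset.range k, Zv (c • x) (t + i * g) J
      = ∏ i ∈ Finset.range k, (c * Zv x (t + i * g) J) :=
        Finset.prod_congr rfl (fun i _ => Zv_smul c x _ J)
    _ = c ^ k * ZP x k t J := by
        rw [Finset.prod_mul_distrib, Finset.prod_const, Finset.card_range]; rfl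

lemma ZP_splice_lo {g : ℕ} (x : Vnm n g) {k t r : ℕ} (h : t + k * g ≤ r)
    (K J : ℕ → Fin n) : ZP x k t (spliceJ r K J) = ZP x k t K := by
  unfold ZP
  apply Finset.prod_congr rfl
  intro i hi
  simp only [Finset.mem_range] at hi
  apply Zv_splice_lo
  have : (i + 1) * g ≤ k * g := Nat.mul_le_mul_right g (by omega)
  rw [Nat.add_mul] at this
  omega

lemma ZP_splice_hi {g : ℕ} (x : Vnm n g) {k t r : ℕ} (h : r ≤ t)
    (K J : ℕ → Fin n) : ZP x k t (spliceJ r K J) = ZP x k (t - r) J := by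
  unfold ZP
  apply Finset.prod_congr rfl
  intro i _
  rw [Zv_splice_hi x (by omega) K J]
  apply Zv_off
  omega

lemma tens_ne_zero [NeZero n] {p q : ℕ} {A : Vnm n p} {B : Vnm n q}
    (hA : A ≠ 0) (hB : B ≠ 0) : tensV A B ≠ 0 := by
  obtain ⟨JA, hJA⟩ := exists_Zv_ne hA
  obtain ⟨JB, hJB⟩ := exists_Zv_ne hB
  apply ne_zero_of_Zv (J := spliceJ p JA JB) (t := 0)
  rw [Zv_tensV, Zv_splice_lo A (by omega), Zv_splice_hi B (by omega)]
  simp only [Nat.zero_add, Nat.sub_self]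
  exact mul_ne_zero hJA hJB

lemma tpow_ne_zero [NeZero n] {g : ℕ} (hg : 0 < g) {x : Vnm n g} (hx : x ≠ 0)
    (k : ℕ) : tpowV x k ≠ 0 := by
  obtain ⟨K₀, hK₀⟩ : ∃ K, x K ≠ 0 := by
    by_contra hc
    push_neg at hc
    exact hx (by ext K; exact hc K)
  set J : ℕ → Fin n := fun i => K₀ ⟨i % g, Nat.mod_lt i hg⟩ with hJ
  apply ne_zero_of_Zv (J := J) (t := 0)
  rw [Zv_tpowV]
  unfold ZP
  have : ∀ i ∈ Finset.range k, Zv x (0 + i * g) J = x K₀ := by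
    intro i _
    unfold Zv
    apply congrArg
    funext s
    show K₀ ⟨(0 + i * g + (s:ℕ)) % g, _⟩ = K₀ s
    congr 1
    apply Fin.ext
    show (0 + i * g + (s:ℕ)) % g = (s:ℕ)
    rw [show 0 + i * g + (s : ℕ) = (s : ℕ) + i * g by omega]
    rw [Nat.add_mul_mod_self_right]
    exact Nat.mod_eq_of_lt s.isLt
  rw [Finset.prod_congr rfl this, Finset.prod_const, Finset.card_range]
  exact pow_ne_zero k hK₀

end AuxFramework

section AuxFramework2

open Finset

variable {n : ℕ}

lemma Zv_shift {m : ℕ} (u : Vnm n m) (s t : ℕ) (J : ℕ → Fin n) :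
    Zv u s (fun i => J (t + i)) = Zv u (t + s) J := by
  unfold Zv
  apply congrArg
  funext i
  show J (t + (s + (i:ℕ))) = J (t + s + (i:ℕ))
  congr 1
  omega

lemma ZP_shift {g : ℕ} (x : Vnm n g) (k s t : ℕ) (J : ℕ → Fin n) :
    ZP x k s (fun i => J (t + i)) = ZP x k (t + s) J := by
  unfold ZP
  apply Finset.prod_congr rfl
  intro i _
  rw [Zv_shift]
  apply Zv_off
  omega

lemma ZP_glue {g : ℕ} (x : Vnm n g) {k₁ k₂ t₁ : ℕ} (h : t₁ = k₁ * g) (J : ℕ → Fin n) :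
    ZP x k₁ 0 J * ZP x k₂ t₁ J = ZP x (k₁ + k₂) 0 J := by
  rw [ZP_add x k₁ k₂ 0 J, ZP_off x rfl (show (0 + k₁*g) = t₁ by omega) J]

lemma gcd_sub_left {p q : ℕ} (h : q ≤ p) : Nat.gcd (p - q) q = Nat.gcd p q := by
  apply Nat.dvd_antisymm
  · apply Nat.dvd_gcd
    · have h1 : Nat.gcd (p-q) q ∣ (p - q) + q :=
        Dvd.dvd.add (Nat.gcd_dvd_left _ _) (Nat.gcd_dvd_right _ _)
      rwa [Nat.sub_add_cancel h] at h1
    · exact Nat.gcd_dvd_right _ _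
  · exact Nat.dvd_gcd (Nat.dvd_sub (Nat.gcd_dvd_left _ _) (Nat.gcd_dvd_right _ _))
      (Nat.gcd_dvd_right _ _)

lemma div_add_div_of_dvd {g a b : ℕ} (hg : 0 < g) (ha : g ∣ a) (hb : g ∣ b) :
    a / g + b / g = (a + b) / g := by
  obtain ⟨a', rfl⟩ := ha
  obtain ⟨b', rfl⟩ := hb
  rw [Nat.mul_div_cancel_left _ hg, Nat.mul_div_cancel_left _ hg, ← Nat.mul_add,
    Nat.mul_div_cancel_left _ hg]

/- norms -/

private lemma finmk_eq {M a b : ℕ} (ha : a < M) (hb : b < M) (h : a = b) :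
    (⟨a, ha⟩ : Fin M) = ⟨b, hb⟩ := Fin.ext h


lemma norm_castV {m m' : ℕ} (h : m = m') (z : Vnm n m) : ‖castV h z‖ = ‖z‖ := by
  subst h
  rfl

lemma norm_split [NeZero n] {M r s : ℕ} (hM : r + s = M) (P : Vnm n M) (R : Vnm n r)
    (w : Vnm n s) (h : ∀ J, Zv P 0 J = Zv R 0 J * Zv w r J) : ‖P‖ = ‖R‖ * ‖w‖ := by
  have key : ∀ K : Fin M → Fin n,
      P K = R (fun i => K ⟨(i:ℕ), by have := i.isLt; omega⟩) *
            w (fun i => K ⟨r + (i:ℕ), by have := i.isLt; omega⟩) := by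
    intro K
    have hh := h (extJ K)
    rw [Zv_extJ] at hh
    rw [hh]
    congr 1
    · unfold Zv
      apply congrArg
      funext i
      have hi : (i:ℕ) < r := i.isLt
      unfold extJ
      rw [dif_pos (show 0 + (i:ℕ) < M by omega)]
      exact congrArg K (finmk_eq _ _ (by omega))
    · unfold Zv
      apply congrArg
      funext i
      have hi : (i:ℕ) < s := i.isLt
      unfold extJ
      rw [dif_pos (show r + (i:ℕ) < M by omega)]
  let e : ((Fin r → Fin n) × (Fin s → Fin n)) ≃ (Fin M → Fin n) :=
    { toFun := fun p i => if h : (i:ℕ) < r then p.1 ⟨i, h⟩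
        else p.2 ⟨(i:ℕ) - r, by have := i.isLt; omega⟩
      invFun := fun K => (fun i => K ⟨(i:ℕ), by have := i.isLt; omega⟩,
        fun i => K ⟨r + (i:ℕ), by have := i.isLt; omega⟩)
      left_inv := by
        intro p
        refine Prod.ext ?_ ?_
        · funext i
          have hi : (i:ℕ) < r := i.isLt
          show (if h : (i:ℕ) < r then p.1 ⟨(i:ℕ), h⟩ else _) = p.1 i
          rw [dif_pos hi]
        · funext i
          have hi : (i:ℕ) < s := i.isLt
          show (if h : r + (i:ℕ) < r then p.1 ⟨r + (i:ℕ), h⟩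
            else p.2 ⟨r + (i:ℕ) - r, by omega⟩) = p.2 i
          rw [dif_neg (by omega)]
          exact congrArg p.2 (finmk_eq _ _ (by omega))
      right_inv := by
        intro K
        funext i
        by_cases hc : (i:ℕ) < r
        · show (if h : (i:ℕ) < r then K ⟨(i:ℕ), by omega⟩ else _) = K i
          rw [dif_pos hc]
        · have hi := i.isLt
          show (if h : (i:ℕ) < r then _ else K ⟨r + ((i:ℕ) - r), by omega⟩) = K i
          rw [dif_neg hc]
          exact congrArg K (finmk_eq _ _ (by omega)) }
  have he : ∀ (X : Fin r → Fin n) (Y : Fin s → Fin n), P (e (X, Y)) = R X * w Y := by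
    intro X Y
    rw [key]
    congr 1
    · apply congrArg
      funext i
      have hi : (i:ℕ) < r := i.isLt
      show (if h : (i:ℕ) < r then X ⟨(i:ℕ), h⟩ else _) = X i
      rw [dif_pos hi]
    · apply congrArg
      funext i
      have hi : (i:ℕ) < s := i.isLt
      show (if h : r + (i:ℕ) < r then X ⟨r + (i:ℕ), h⟩
        else Y ⟨r + (i:ℕ) - r, by omega⟩) = Y i
      rw [dif_neg (by omega)]
      exact congrArg Y (finmk_eq _ _ (by omega))
  rw [EuclideanSpace.norm_eq P, EuclideanSpace.norm_eq R, EuclideanSpace.norm_eq w,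
    ← Real.sqrt_mul (by positivity)]
  congr 1
  rw [← Equiv.sum_comp e (fun K => ‖P K‖^2), Fintype.sum_prod_type, Finset.sum_mul_sum]
  apply Finset.sum_congr rfl
  intro X _
  apply Finset.sum_congr rfl
  intro Y _
  rw [he X Y, norm_mul, mul_pow]

lemma norm_tpow [NeZero n] {g : ℕ} (x : Vnm n g) (p : ℕ) : ‖tpowV x p‖ = ‖x‖ ^ p := by
  induction p with
  | zero =>
    have hval : ∀ K : Fin (0 * g) → Fin n, tpowV x 0 K = 1 := by
      intro K
      unfold tpowV
      dsimp only
      exact Finset.prod_of_isEmpty _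
    rw [EuclideanSpace.norm_eq]
    have hcard : Fintype.card (Fin (0 * g) → Fin n) = 1 := by
      have : IsEmpty (Fin (0 * g)) := ⟨fun i => absurd i.isLt (by omega)⟩
      rw [Fintype.card_fun]
      simp [Fintype.card_eq_zero]
    simp only [hval, norm_one, one_pow]
    rw [Finset.sum_const, Finset.card_univ, hcard]
    simp
  | succ p ih =>
    have hsplit : ‖tpowV x (p+1)‖ = ‖x‖ * ‖tpowV x p‖ := by
      apply norm_split (hM := show g + p * g = (p+1)*g by ring)
      intro J
      rw [Zv_tpowV, Zv_tpowV, ZP_succ_front]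
      congr 1
      exact ZP_off _ rfl (by omega) J
    rw [hsplit, ih, pow_succ]
    ring

end AuxFramework2

section AuxFramework3

open Finset

variable {n : ℕ}

/-- Levi's lemma for tensors, in cylinder-function form. -/
lemma levi [NeZero n] {dP dQ dR dS : ℕ} (P : Vnm n dP) (Q : Vnm n dQ) (R : Vnm n dR)
    (S : Vnm n dS) (hdr : dR ≤ dP) (hP : P ≠ 0) (hQ : Q ≠ 0) (hR : R ≠ 0)
    (H : ∀ J, Zv P 0 J * Zv Q dP J = Zv R 0 J * Zv S dR J) :
    ∃ w : Vnm n (dP - dR), w ≠ 0 ∧ (∀ J, Zv P 0 J = Zv R 0 J * Zv w dR J) ∧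
      (∀ J, Zv S 0 J = Zv w 0 J * Zv Q (dP - dR) J) := by
  obtain ⟨J₀, hJ₀⟩ := exists_Zv_ne hQ
  obtain ⟨J₁, hJ₁⟩ := exists_Zv_ne hR
  set w : Vnm n (dP - dR) := WithLp.toLp 2 (fun (K : Fin (dP - dR) → Fin n) => S (fun i => if h : (i:ℕ) < dP - dR then K ⟨(i:ℕ), h⟩
      else J₀ ((i:ℕ) - (dP - dR))) * (Zv Q 0 J₀)⁻¹) with hwdef
  have hwc : ∀ (t : ℕ) (J : ℕ → Fin n),
      Zv w t J * Zv Q 0 J₀ = Zv S 0 (spliceJ (dP - dR) (fun i => J (t + i)) J₀) := by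
    intro t J
    show (S (fun i => if h : (i:ℕ) < dP - dR then J (t + (i:ℕ))
      else J₀ ((i:ℕ) - (dP - dR))) * (Zv Q 0 J₀)⁻¹) * Zv Q 0 J₀ = _
    rw [mul_assoc, inv_mul_cancel₀ hJ₀, mul_one]
    unfold Zv
    apply congrArg
    funext i
    simp only [spliceJ]
    by_cases hc : (i:ℕ) < dP - dR
    · rw [dif_pos hc, if_pos (by omega)]
      show J (t + (i:ℕ)) = J (t + (0 + (i:ℕ)))
      congr 1
      omega
    · rw [dif_neg hc, if_neg (by omega)]
      congr 1
      omega
  have ha : ∀ J, Zv P 0 J = Zv R 0 J * Zv w dR J := by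
    intro J
    have hH := H (spliceJ dP J J₀)
    rw [Zv_splice_lo P (by omega), Zv_splice_hi Q (le_refl dP),
      Zv_splice_lo R (by omega), Zv_off Q (show dP - dP = 0 by omega)] at hH
    have hS : Zv S dR (spliceJ dP J J₀) = Zv w dR J * Zv Q 0 J₀ := by
      rw [hwc dR J]
      unfold Zv
      apply congrArg
      funext i
      simp only [spliceJ]
      by_cases hc : dR + (i:ℕ) < dP
      · rw [if_pos hc, if_pos (by omega)]
        show J (dR + (i:ℕ)) = J (dR + (0 + (i:ℕ)))
        congr 1
        omega
      · rw [if_neg hc, if_neg (by omega)]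
        congr 1
        omega
    rw [hS] at hH
    apply mul_right_cancel₀ hJ₀
    rw [hH]
    ring
  have hb : ∀ J, Zv S 0 J = Zv w 0 J * Zv Q (dP - dR) J := by
    intro J
    have h2 := H (spliceJ dR J₁ J)
    rw [Zv_splice_lo R (by omega), Zv_splice_hi S (le_refl dR),
      Zv_off S (show dR - dR = 0 by omega), Zv_splice_hi Q hdr] at h2
    have h3 := H (spliceJ dR J₁ (spliceJ (dP - dR) J J₀))
    rw [Zv_splice_lo R (by omega), Zv_splice_hi S (le_refl dR),
      Zv_off S (show dR - dR = 0 by omega), Zv_splice_hi Q hdr] at h3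
    have hPP : Zv P 0 (spliceJ dR J₁ (spliceJ (dP - dR) J J₀)) =
        Zv P 0 (spliceJ dR J₁ J) := by
      apply Zv_congrJ
      intro i hi
      simp only [spliceJ]
      by_cases hc : 0 + i < dR
      · rw [if_pos hc, if_pos hc]
      · rw [if_neg hc, if_neg hc, if_pos (by omega)]
    have hQQ : Zv Q (dP - dR) (spliceJ (dP - dR) J J₀) = Zv Q 0 J₀ := by
      rw [Zv_splice_hi Q (le_refl _), Zv_off Q (show dP - dR - (dP - dR) = 0 by omega)]
    have hSS : Zv S 0 (spliceJ (dP - dR) J J₀) = Zv w 0 J * Zv Q 0 J₀ := by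
      rw [hwc 0 J]
      apply Zv_congrJ
      intro i hi
      simp only [spliceJ]
      by_cases hc : 0 + i < dP - dR
      · rw [if_pos hc, if_pos hc]
        congr 1
        omega
      · rw [if_neg hc, if_neg hc]
    rw [hPP, hQQ, hSS] at h3
    -- h3 : Zv P 0 (spliceJ dR J₁ J) * Zv Q 0 J₀ = Zv R 0 J₁ * (Zv w 0 J * Zv Q 0 J₀)
    have hAP : Zv P 0 (spliceJ dR J₁ J) = Zv R 0 J₁ * Zv w 0 J := by
      apply mul_right_cancel₀ hJ₀
      rw [h3]
      ring
    rw [hAP] at h2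
    -- h2 : Zv R 0 J₁ * Zv w 0 J * Zv Q (dP - dR) J = Zv R 0 J₁ * Zv S 0 J
    have := mul_left_cancel₀ hJ₁ (by rw [← h2]; ring :
      Zv R 0 J₁ * Zv S 0 J = Zv R 0 J₁ * (Zv w 0 J * Zv Q (dP - dR) J))
    exact this
  have hwne : w ≠ 0 := by
    intro hw0
    apply hP
    apply vnm_eq_zero
    intro J
    have := ha J
    rw [hw0, Zv_zero, mul_zero] at this
    exact this
  exact ⟨w, hwne, ha, hb⟩

/-- Regrouping an alternating product: `B ⊗ (A⊗B)^k ⊗ A = (B⊗A)^(k+1)`. -/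
lemma alt_shuffle {sA sB : ℕ} (A : Vnm n sA) (B : Vnm n sB) :
    ∀ (k t : ℕ) (J : ℕ → Fin n),
      (Zv B t J * ∏ i ∈ Finset.range k, (Zv A (t + sB + i * (sA + sB)) J *
        Zv B (t + sB + i * (sA + sB) + sA) J)) * Zv A (t + sB + k * (sA + sB)) J =
      ∏ i ∈ Finset.range (k + 1), (Zv B (t + i * (sB + sA)) J *
        Zv A (t + i * (sB + sA) + sB) J) := by
  intro k
  induction k with
  | zero =>
    intro t J
    simp only [Finset.range_zero, Finset.prod_empty, Finset.prod_range_one, mul_one,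
      Nat.zero_mul, Nat.add_zero, Nat.zero_add]
  | succ k ih =>
    intro t J
    have e1 : ∀ i : ℕ, t + sB + (i+1) * (sA + sB) = (t + (sB + sA)) + sB + i * (sA + sB) := by
      intro i; rw [Nat.succ_mul]; omega
    have e2 : ∀ i : ℕ, t + (i+1) * (sB + sA) = (t + (sB + sA)) + i * (sB + sA) := by
      intro i; rw [Nat.succ_mul]; omega
    have e4 : t + sB + sA = t + (sB + sA) := by omega
    rw [Finset.prod_range_succ' (fun i => Zv B (t + i * (sB + sA)) J *
      Zv A (t + i * (sB + sA) + sB) J) (k+1)]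
    rw [Finset.prod_range_succ' (fun i => Zv A (t + sB + i * (sA + sB)) J *
      Zv B (t + sB + i * (sA + sB) + sA) J) k]
    simp only [e1, e2, e4, Nat.zero_mul, Nat.add_zero]
    rw [← ih (t + (sB + sA)) J]
    ring
end AuxFramework3

section AuxFramework5

open Finset

variable {n : ℕ}

/-- Conjugate regrouping: if `xx = A ⊗ B` pointwise (degrees `sA + sB = g`), then
`B ⊗ xx^{⊗k} ⊗ A = (B ⊗ A)^{⊗(k+1)}` pointwise. -/
lemma regroup {sA sB g : ℕ} (A : Vnm n sA) (B : Vnm n sB) (xx : Vnm n g)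
    (hs : sA + sB = g) (k : ℕ)
    (hsplit : ∀ (T : ℕ) (J : ℕ → Fin n), Zv xx T J = Zv A T J * Zv B (T + sA) J)
    (J : ℕ → Fin n) :
    (Zv B 0 J * ZP xx k sB J) * Zv A (sB + k * g) J = ZP (tensV B A) (k + 1) 0 J := by
  have hexp : ZP xx k sB J = ∏ i ∈ Finset.range k,
      (Zv A (sB + i * g) J * Zv B ((sB + i * g) + sA) J) := by
    unfold ZP
    exact Finset.prod_congr rfl (fun i _ => hsplit _ J)
  have hconv1 : ∀ i : ℕ, 0 + sB + i * (sA + sB) = sB + i * g := by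
    intro i
    rw [hs]
    omega
  have hconv2 : ∀ i : ℕ, 0 + i * (sB + sA) = i * g := by
    intro i
    rw [show sB + sA = g from by omega]
    omega
  have hsh := alt_shuffle A B k 0 J
  simp only [hconv1, hconv2] at hsh
  have htens : ZP (tensV B A) (k + 1) 0 J = ∏ i ∈ Finset.range (k + 1),
      (Zv B (i * g) J * Zv A (i * g + sB) J) := by
    unfold ZP
    apply Finset.prod_congr rfl
    intro i _
    rw [Zv_tensV, Zv_off B (hconv2 i) J,
      Zv_off A (show 0 + i * (sB + sA) + sB = i * g + sB from by rw [hconv2 i]) J]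
  rw [hexp, htens]
  exact hsh

end AuxFramework5

section AuxFramework4

open Finset

variable {n : ℕ}

lemma pow_eq_prop [NeZero n] {N₁ N₂ : ℕ} (hN : N₁ = N₂) (h0 : 0 < N₁) {k : ℕ}
    (hk : 1 ≤ k) (u : Vnm n N₁) (v : Vnm n N₂) (hu : u ≠ 0) (hv : v ≠ 0)
    (h : ∀ J, ZP u k 0 J = ZP v k 0 J) :
    ∃ c : ℂ, c ≠ 0 ∧ ∀ J, Zv u 0 J = c * Zv v 0 J := by
  subst hN
  obtain ⟨k', rfl⟩ : ∃ k', k = k' + 1 := ⟨k - 1, by omega⟩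
  have H : ∀ J, Zv u 0 J * Zv (tpowV u k') N₁ J = Zv v 0 J * Zv (tpowV v k') N₁ J := by
    intro J
    rw [Zv_tpowV, Zv_tpowV]
    have h1 := h J
    rw [ZP_succ_front, ZP_succ_front] at h1
    rw [ZP_off u rfl (show N₁ = 0 + N₁ by omega) J, ZP_off v rfl (show N₁ = 0 + N₁ by omega) J]
    exact h1
  obtain ⟨w, hw0, hwa, _⟩ := levi u (tpowV u k') v (tpowV v k') (le_refl N₁) hu
    (tpow_ne_zero h0 hu k') hv H
  have hcz : ∀ (t t' : ℕ) (J J' : ℕ → Fin n), Zv w t J = Zv w t' J' :=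
    fun t t' J J' => Zv_degzero (by omega) w t t' J J'
  set c : ℂ := Zv w 0 (fun _ => dflt) with hcdef
  refine ⟨c, ?_, ?_⟩
  · obtain ⟨J, hJ⟩ := exists_Zv_ne hw0
    rwa [hcz 0 0 J (fun _ => dflt)] at hJ
  · intro J
    rw [hwa J, hcz N₁ 0 J (fun _ => dflt)]
    ring

lemma commPowScaled [NeZero n] : ∀ (fuel : ℕ) {p q : ℕ} (u : Vnm n p) (v : Vnm n q)
    (ξ : ℂ), p + q ≤ fuel → 1 ≤ p → 1 ≤ q → u ≠ 0 → v ≠ 0 →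
    (∀ J, Zv u 0 J * Zv v p J = ξ * (Zv v 0 J * Zv u q J)) →
    ∃ (x : Vnm n (Nat.gcd p q)) (lam mu : ℂ), x ≠ 0 ∧
      (∀ J, Zv u 0 J = lam * ZP x (p / Nat.gcd p q) 0 J) ∧
      (∀ J, Zv v 0 J = mu * ZP x (q / Nat.gcd p q) 0 J) := by
  intro fuel
  induction fuel with
  | zero => intro p q u v ξ hf hp hq _ _ _; omega
  | succ fuel ih =>
    intro p q u v ξ hf hp hq hu hv hcm
    obtain ⟨Ju, hJu⟩ := exists_Zv_ne hu
    obtain ⟨Jv, hJv⟩ := exists_Zv_ne hv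
    have hξ : ξ ≠ 0 := by
      intro h0
      have hh := hcm (spliceJ p Ju Jv)
      rw [h0, zero_mul, Zv_splice_lo u (by omega), Zv_splice_hi v (le_refl p),
        Zv_off v (show p - p = 0 by omega)] at hh
      exact mul_ne_zero hJu hJv hh
    have hgpos : 0 < Nat.gcd p q := Nat.gcd_pos_of_pos_left q (by omega)
    rcases lt_trichotomy p q with hlt | heq | hgt
    · -- p < q
      have H : ∀ J, Zv (ξ • v) 0 J * Zv u q J = Zv u 0 J * Zv v p J := by
        intro J
        rw [Zv_smul, hcm J]
        ring
      obtain ⟨w, hw0, hwa, hwb⟩ := levi (ξ • v) u u v (le_of_lt hlt)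
        (smul_ne_zero hξ hv) hu hu H
      have hcm' : ∀ J, Zv w 0 J * Zv u (q - p) J = ξ⁻¹ * (Zv u 0 J * Zv w p J) := by
        intro J
        rw [← hwb J]
        have h5 := hwa J
        rw [Zv_smul] at h5
        rw [← h5, ← mul_assoc, inv_mul_cancel₀ hξ, one_mul]
      obtain ⟨x, lam, mu, hx0, hxw, hxu⟩ := ih w u ξ⁻¹ (by omega) (by omega) hp hw0 hu hcm'
      have hgg : Nat.gcd (q - p) p = Nat.gcd p q := by
        rw [gcd_sub_left (le_of_lt hlt)]
        exact Nat.gcd_comm q p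
      have hdv1 : Nat.gcd (q-p) p ∣ (q - p) := Nat.gcd_dvd_left _ _
      have hdv2 : Nat.gcd (q-p) p ∣ p := Nat.gcd_dvd_right _ _
      have hgpos' : 0 < Nat.gcd (q-p) p := by omega
      have hxuT : ∀ (t : ℕ) (J : ℕ → Fin n),
          Zv u t J = mu * ZP x (p / Nat.gcd (q-p) p) t J := by
        intro t J
        have := hxu (fun i => J (t + i))
        rw [Zv_shift, ZP_shift] at this
        rw [Zv_off u (show t = t + 0 by omega) J,
          ZP_off x rfl (show t = t + 0 by omega) J]
        exact this
      refine ⟨castV hgg x, mu, lam * mu, by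
          intro hz
          apply hx0
          apply vnm_eq_zero
          intro J
          have := Zv_castV hgg x 0 J
          rw [hz, Zv_zero] at this
          exact this.symm, ?_, ?_⟩
      · intro J
        rw [ZP_castV hgg x, ← hgg]
        exact hxu J
      · intro J
        rw [ZP_castV hgg x, ← hgg]
        rw [hwb J, hxw J, hxuT (q - p) J,
          ZP_off x rfl (show q - p = ((q-p) / Nat.gcd (q-p) p) * Nat.gcd (q-p) p by
            rw [Nat.div_mul_cancel hdv1]) J]
        have hq' : q / Nat.gcd (q-p) p = (q-p) / Nat.gcd (q-p) p + p / Nat.gcd (q-p) p := by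
          rw [div_add_div_of_dvd hgpos' hdv1 hdv2]
          congr 1
          omega
        rw [hq', ← ZP_glue x rfl J]
        ring
    · -- p = q
      subst heq
      have hc1 : p / Nat.gcd p p = 1 := by
        rw [Nat.gcd_self]
        exact Nat.div_self (by omega)
      have hgs : p = Nat.gcd p p := (Nat.gcd_self p).symm
      have hkey : ∀ J, Zv u 0 J * Zv v 0 Ju = ξ * (Zv v 0 J * Zv u 0 Ju) := by
        intro J
        have e1 : Zv u 0 (spliceJ p J Ju) = Zv u 0 J := Zv_splice_lo u (by omega) _ _
        have e2 : Zv v 0 (spliceJ p J Ju) = Zv v 0 J := Zv_splice_lo v (by omega) _ _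
        have e3 : Zv v p (spliceJ p J Ju) = Zv v 0 Ju := by
          rw [Zv_splice_hi v (le_refl p)]
          exact Zv_off v (by omega) Ju
        have e4 : Zv u p (spliceJ p J Ju) = Zv u 0 Ju := by
          rw [Zv_splice_hi u (le_refl p)]
          exact Zv_off u (by omega) Ju
        have hh := hcm (spliceJ p J Ju)
        rw [e1, e2, e3, e4] at hh
        exact hh
      refine ⟨castV hgs u, 1, Zv v 0 Ju / (ξ * Zv u 0 Ju), by
          intro hz
          apply hu
          apply vnm_eq_zero
          intro J
          have := Zv_castV hgs u 0 J
          rw [hz, Zv_zero] at this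
          exact this.symm, ?_, ?_⟩
      · intro J
        rw [hc1, ZP_one, Zv_castV, one_mul]
      · intro J
        rw [hc1, ZP_one, Zv_castV]
        have hh := hkey J
        rw [div_mul_eq_mul_div, eq_div_iff (mul_ne_zero hξ hJu)]
        linear_combination -hh
    · -- q < p
      have H : ∀ J, Zv u 0 J * Zv v p J = Zv (ξ • v) 0 J * Zv u q J := by
        intro J
        rw [Zv_smul, hcm J]
        ring
      obtain ⟨w, hw0, hwa, hwb⟩ := levi u v (ξ • v) u (le_of_lt hgt)
        hu hv (smul_ne_zero hξ hv) H
      have hcm' : ∀ J, Zv w 0 J * Zv v (p - q) J = ξ * (Zv v 0 J * Zv w q J) := by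
        intro J
        rw [← hwb J, hwa J, Zv_smul]
        ring
      obtain ⟨x, lam, mu, hx0, hxw, hxv⟩ := ih w v ξ (by omega) (by omega) hq hw0 hv hcm'
      have hgg : Nat.gcd (p - q) q = Nat.gcd p q := gcd_sub_left (le_of_lt hgt)
      have hdv1 : Nat.gcd (p-q) q ∣ (p - q) := Nat.gcd_dvd_left _ _
      have hdv2 : Nat.gcd (p-q) q ∣ q := Nat.gcd_dvd_right _ _
      have hgpos' : 0 < Nat.gcd (p-q) q := by omega
      have hxvT : ∀ (t : ℕ) (J : ℕ → Fin n),
          Zv v t J = mu * ZP x (q / Nat.gcd (p-q) q) t J := by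
        intro t J
        have := hxv (fun i => J (t + i))
        rw [Zv_shift, ZP_shift] at this
        rw [Zv_off v (show t = t + 0 by omega) J,
          ZP_off x rfl (show t = t + 0 by omega) J]
        exact this
      refine ⟨castV hgg x, lam * mu, mu, by
          intro hz
          apply hx0
          apply vnm_eq_zero
          intro J
          have := Zv_castV hgg x 0 J
          rw [hz, Zv_zero] at this
          exact this.symm, ?_, ?_⟩
      · intro J
        rw [ZP_castV hgg x, ← hgg]
        rw [hwb J, hxw J, hxvT (p - q) J,
          ZP_off x rfl (show p - q = ((p-q) / Nat.gcd (p-q) q) * Nat.gcd (p-q) q by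
            rw [Nat.div_mul_cancel hdv1]) J]
        have hp' : p / Nat.gcd (p-q) q = (p-q) / Nat.gcd (p-q) q + q / Nat.gcd (p-q) q := by
          rw [div_add_div_of_dvd hgpos' hdv1 hdv2]
          congr 1
          omega
        rw [hp', ← ZP_glue x rfl J]
        ring
      · intro J
        rw [ZP_castV hgg x, ← hgg]
        exact hxv J

lemma periodic_of_scaled_pow [NeZero n] {m M p : ℕ} {z : Vnm n m} (hz : ‖z‖ = 1)
    (hp : 2 ≤ p) (hM : p * M = m) (x : Vnm n M) (c : ℂ)
    (h : ∀ J, Zv z 0 J = c * ZP x p 0 J) : PeriodicV z := by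
  obtain ⟨ρ, hρ⟩ := IsAlgClosed.exists_pow_nat_eq c (n := p) (by omega)
  have key : castV hM (tpowV (ρ • x) p) = z := by
    apply vnm_ext
    intro J
    rw [Zv_castV, Zv_tpowV, ZP_smul, hρ, ← h J]
  have hnx : ‖ρ • x‖ = 1 := by
    have h1 : ‖z‖ = ‖ρ • x‖ ^ p := by
      rw [← key, norm_castV, norm_tpow]
    have h2 : (0:ℝ) ≤ ‖ρ • x‖ := norm_nonneg _
    rw [hz] at h1
    by_contra hne
    rcases lt_or_gt_of_ne hne with hlt2 | hgt2
    · have := pow_lt_one₀ h2 hlt2 (show p ≠ 0 by omega)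
      rw [← h1] at this
      exact lt_irrefl _ this
    · have := one_lt_pow₀ hgt2 (show p ≠ 0 by omega)
      rw [← h1] at this
      exact lt_irrefl _ this
  exact ⟨M, p, ρ • x, hM, hnx, hp, key⟩

end AuxFramework4

/-- if `m > l`, `d = αm = βl`, `1 ≤ a ≤ d−1`, and
`z^{⊗α} = z₁ ⊗ z₂`, `y^{⊗β} = z₂ ⊗ z₁` for unit vectors `z₁ ∈ V_{n,a}`,
`z₂ ∈ V_{n,d−a}`, then `z` is periodic. -/
theorem subCuntz_stmt8 {n m l : ℕ} (hn : 2 ≤ n) (hm : 1 ≤ m) (hl : 1 ≤ l) (hlm : l < m)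
    (z : Vnm n m) (y : Vnm n l) (hz : ‖z‖ = 1) (hy : ‖y‖ = 1)
    (α β d a : ℕ) (hα : 1 ≤ α) (hβ : 1 ≤ β) (hd1 : d = α * m) (hd2 : d = β * l)
    (ha1 : 1 ≤ a) (ha2 : a ≤ d - 1)
    (z₁ : Vnm n a) (z₂ : Vnm n (d - a)) (hz1 : ‖z₁‖ = 1) (hz2 : ‖z₂‖ = 1)
    (h1 : castV (by rw [← hd1]; omega : α * m = a + (d - a)) (tpowV z α) = tensV z₁ z₂)
    (h2 : castV (by rw [← hd2]; omega : β * l = (d - a) + a) (tpowV y β) = tensV z₂ z₁) :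
    PeriodicV z := by
  have hnz : NeZero n := ⟨by omega⟩
  have hz0 : z ≠ 0 := by intro h; rw [h] at hz; simp at hz
  have hy0 : y ≠ 0 := by intro h; rw [h] at hy; simp at hy
  have hz10 : z₁ ≠ 0 := by intro h; rw [h] at hz1; simp at hz1
  have hz20 : z₂ ≠ 0 := by intro h; rw [h] at hz2; simp at hz2
  subst hd1
  -- basic arithmetic facts
  have hαm1 : 1 ≤ α * m := Nat.mul_le_mul hα hm
  have ha' : a < α * m := by omega
  have hβα : α < β := by
    have h1' : α * l < α * m := mul_lt_mul_of_pos_left hlm (by omega)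
    rw [hd2] at h1'
    exact Nat.lt_of_mul_lt_mul_right h1'
  have hβ2 : 2 ≤ β := by omega
  -- div/mod bookkeeping for a
  have hdm := Nat.div_add_mod a m
  have hmc : m * (a / m) = (a / m) * m := Nat.mul_comm _ _
  have hmod := Nat.mod_lt a (show 0 < m by omega)
  set t := a / m with htdef
  have htm_le : t * m ≤ a := by omega
  have har : a - t * m < m := by omega
  have htα : t < α := by
    have h8 : t * m < α * m := by omega
    exact Nat.lt_of_mul_lt_mul_right h8
  have htm1 : (t + 1) * m ≤ α * m := Nat.mul_le_mul_right m (by omega)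
  have htm1' : t * m + m ≤ α * m := by rw [Nat.add_mul, Nat.one_mul] at htm1; omega
  -- Zv forms of the hypotheses
  have H1 : ∀ J, ZP z α 0 J = Zv z₁ 0 J * Zv z₂ a J := by
    intro J
    have hh := congrArg (fun v => Zv v 0 J) h1
    rw [Zv_castV, Zv_tpowV, Zv_tensV, Zv_off z₂ (show 0 + a = a by omega) J] at hh
    exact hh
  have H2 : ∀ J, ZP y β 0 J = Zv z₂ 0 J * Zv z₁ (α * m - a) J := by
    intro J
    have hh := congrArg (fun v => Zv v 0 J) h2
    rw [Zv_castV, Zv_tpowV, Zv_tensV, Zv_off z₁ (show 0 + (α * m - a) = α * m - a by omega) J] at hh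
    exact hh
  -- Levi step 1 : z₁ = z^{⊗t} ⊗ A
  have hg1 : ∀ J, Zv z₁ 0 J * Zv z₂ a J =
      Zv (tpowV z t) 0 J * Zv (tpowV z (α - t)) (t * m) J := by
    intro J
    rw [Zv_tpowV, Zv_tpowV, ZP_glue z rfl J,
      ZP_off z (show t + (α - t) = α by omega) rfl J]
    exact (H1 J).symm
  obtain ⟨A, hA0, hA1, hA2⟩ := levi z₁ z₂ (tpowV z t) (tpowV z (α - t))
    htm_le hz10 hz20 (tpow_ne_zero (by omega) hz0 t) hg1
  -- Levi step 2 : z = A ⊗ B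
  have hg2 : ∀ J, Zv z 0 J * Zv (tpowV z (α - t - 1)) m J =
      Zv A 0 J * Zv z₂ (a - t * m) J := by
    intro J
    have hh := hA2 J
    rw [Zv_tpowV, ZP_off z (show α - t = (α - t - 1) + 1 by omega) rfl J,
      ZP_succ_front] at hh
    rw [← hh, Zv_tpowV]
    congr 1
    exact ZP_off z rfl (by omega) J
  obtain ⟨B, hB0, hB1, hB2⟩ := levi z (tpowV z (α - t - 1)) A z₂
    (by omega) hz0 (tpow_ne_zero (by omega) hz0 _) hA0 hg2
  -- shifted forms
  have hA1T : ∀ (T : ℕ) (J : ℕ → Fin n),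
      Zv z₁ T J = ZP z t T J * Zv A (T + t * m) J := by
    intro T J
    have hh := hA1 (fun i => J (T + i))
    rw [Zv_tpowV, Zv_shift, ZP_shift, Zv_shift] at hh
    rw [Zv_off z₁ (show T = T + 0 by omega) J, ZP_off z rfl (show T = T + 0 by omega) J]
    exact hh
  have hB1T : ∀ (T : ℕ) (J : ℕ → Fin n),
      Zv z T J = Zv A T J * Zv B (T + (a - t * m)) J := by
    intro T J
    have hh := hB1 (fun i => J (T + i))
    rw [Zv_shift, Zv_shift, Zv_shift] at hh
    rw [Zv_off z (show T = T + 0 by omega) J, Zv_off A (show T = T + 0 by omega) J]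
    exact hh
  have hB2x : ∀ J, Zv z₂ 0 J = Zv B 0 J * ZP z (α - t - 1) (m - (a - t * m)) J := by
    intro J
    have hh := hB2 J
    rwa [Zv_tpowV] at hh
  -- THE KEY IDENTITY : y^{⊗β} = (B ⊗ A)^{⊗α}
  have hE : ∀ J, ZP y β 0 J = ZP (tensV B A) α 0 J := by
    intro J
    have hoff1 : α * m - a = (m - (a - t * m)) + (α - t - 1) * m := by
      have e1 : (α - t - 1) * m = α * m - t * m - m := by
        rw [Nat.sub_mul, Nat.sub_mul, Nat.one_mul]
      omega
    have hoffA : (α * m - a) + t * m = (m - (a - t * m)) + (α - 1) * m := by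
      have e1 : (α - 1) * m = α * m - m := by rw [Nat.sub_mul, Nat.one_mul]
      omega
    have step1 : ZP y β 0 J = (Zv B 0 J * ZP z (α - 1) (m - (a - t * m)) J) *
        Zv A ((m - (a - t * m)) + (α - 1) * m) J := by
      rw [H2 J, hB2x J, hA1T (α * m - a) J, ZP_off z rfl hoff1 J, Zv_off A hoffA J]
      rw [show ZP z (α - 1) (m - (a - t * m)) J = ZP z (α - t - 1) (m - (a - t * m)) J *
          ZP z t ((m - (a - t * m)) + (α - t - 1) * m) J from by
        rw [← ZP_add z (α - t - 1) t (m - (a - t * m)) J]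
        exact ZP_off z (by omega) rfl J]
      ring
    have hr := regroup A B z (by omega) (α - 1) hB1T J
    rw [show α - 1 + 1 = α from by omega] at hr
    rw [step1, ← hr]
  have hz'0 : tensV B A ≠ 0 := tens_ne_zero hB0 hA0
  -- Package : (B ⊗ A) is proportional to a nontrivial tensor power
  have PK : ∃ (G p' : ℕ) (x : Vnm n G) (c : ℂ), 0 < G ∧ x ≠ 0 ∧ c ≠ 0 ∧ 2 ≤ p' ∧
      p' * G = m ∧ (∀ J, Zv (tensV B A) 0 J = c * ZP x p' 0 J) := by
    rcases eq_or_lt_of_le hα with hα1 | hα2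
    · -- α = 1
      have hm' : β * l = m := by
        have hh := hd2
        rw [← hα1, Nat.one_mul] at hh
        omega
      refine ⟨l, β, y, 1, by omega, hy0, one_ne_zero, hβ2, hm', ?_⟩
      intro J
      have hh := hE J
      rw [← hα1, ZP_one] at hh
      rw [one_mul]
      exact hh.symm
    · -- 2 ≤ α
      have hdPm : (m - (a - t * m)) + (a - t * m) = m := by omega
      have hdr : l ≤ (m - (a - t * m)) + (a - t * m) := by omega
      have HE' : ∀ J, Zv (tensV B A) 0 J *
          Zv (tpowV (tensV B A) (α - 1)) ((m - (a - t * m)) + (a - t * m)) J =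
          Zv y 0 J * Zv (tpowV y (β - 1)) l J := by
        intro J
        rw [Zv_tpowV, Zv_tpowV]
        have h7 := hE J
        rw [ZP_off y (show β = (β - 1) + 1 by omega) rfl J,
          ZP_off (tensV B A) (show α = (α - 1) + 1 by omega) rfl J,
          ZP_succ_front, ZP_succ_front] at h7
        rw [ZP_off y rfl (show l = 0 + l by omega) J,
          ZP_off (tensV B A) rfl
            (show (m - (a - t * m)) + (a - t * m) = 0 + ((m - (a - t * m)) + (a - t * m)) by omega) J]
        exact h7.symm
      obtain ⟨w, hw0, hwa, hwb⟩ := levi (tensV B A) (tpowV (tensV B A) (α - 1)) y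
        (tpowV y (β - 1)) hdr hz'0 (tpow_ne_zero (by omega) hz'0 _) hy0 HE'
      -- w : Vnm n ((m - (a - t*m)) + (a - t*m) - l)
      have hz'T : ∀ (T : ℕ) (J : ℕ → Fin n),
          Zv (tensV B A) T J = Zv y T J * Zv w (T + l) J := by
        intro T J
        have hh := hwa (fun i => J (T + i))
        rw [Zv_shift, Zv_shift, Zv_shift] at hh
        rw [Zv_off (tensV B A) (show T = T + 0 by omega) J,
          Zv_off y (show T = T + 0 by omega) J]
        exact hh
      have hwbx : ∀ J, ZP y (β - 1) 0 J = Zv w 0 J *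
          ZP (tensV B A) (α - 1) ((m - (a - t * m)) + (a - t * m) - l) J := by
        intro J
        have hh := hwb J
        rwa [Zv_tpowV, Zv_tpowV] at hh
      -- D2 : y^{⊗β} = (w ⊗ y)^{⊗α}
      have hD2 : ∀ J, ZP y β 0 J = ZP (tensV w y) α 0 J := by
        intro J
        have hoffy : ((m - (a - t * m)) + (a - t * m) - l) +
            (α - 1) * ((m - (a - t * m)) + (a - t * m)) = (β - 1) * l := by
          have e1 : (α - 1) * ((m - (a - t * m)) + (a - t * m)) = α * m - m := by
            rw [hdPm, Nat.sub_mul, Nat.one_mul]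
          have e2 : (β - 1) * l = β * l - l := by rw [Nat.sub_mul, Nat.one_mul]
          omega
        have step2 : ZP y β 0 J = (Zv w 0 J *
            ZP (tensV B A) (α - 1) ((m - (a - t * m)) + (a - t * m) - l) J) *
            Zv y (((m - (a - t * m)) + (a - t * m) - l) +
              (α - 1) * ((m - (a - t * m)) + (a - t * m))) J := by
          rw [ZP_off y (show β = (β - 1) + 1 by omega) rfl J, ZP_succ_back, hwbx J,
            Zv_off y (show 0 + (β - 1) * l = (β - 1) * l by omega) J, Zv_off y hoffy.symm J]
        have hr := regroup y w (tensV B A) (by omega) (α - 1) hz'T J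
        rw [show α - 1 + 1 = α from by omega] at hr
        rw [step2, ← hr]
      -- proportionality : B ⊗ A = c • (w ⊗ y)
      have hP2 : ∀ J, ZP (tensV B A) α 0 J = ZP (tensV w y) α 0 J :=
        fun J => (hE J).symm.trans (hD2 J)
      obtain ⟨c, hc0, hcc⟩ := pow_eq_prop
        (show (m - (a - t * m)) + (a - t * m) =
          ((m - (a - t * m)) + (a - t * m) - l) + l by omega)
        (by omega) hα (tensV B A) (tensV w y) hz'0 (tens_ne_zero hw0 hy0) hP2
      -- scaled commutation between y and w
      have hcm2 : ∀ J, Zv y 0 J * Zv w l J =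
          c * (Zv w 0 J * Zv y ((m - (a - t * m)) + (a - t * m) - l) J) := by
        intro J
        have hh := hcc J
        rw [hwa J, Zv_tensV,
          Zv_off y (show 0 + ((m - (a - t * m)) + (a - t * m) - l) =
            (m - (a - t * m)) + (a - t * m) - l by omega) J] at hh
        exact hh
      obtain ⟨x, lam, mu, hx0, hxy, hxw⟩ := commPowScaled
        (l + ((m - (a - t * m)) + (a - t * m) - l)) y w c (le_refl _)
        hl (by omega) hy0 hw0 hcm2
      have hlam0 : lam ≠ 0 := by
        intro hh
        apply hy0
        apply vnm_eq_zero
        intro J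
        rw [hxy J, hh, zero_mul]
      have hmu0 : mu ≠ 0 := by
        intro hh
        apply hw0
        apply vnm_eq_zero
        intro J
        rw [hxw J, hh, zero_mul]
      have hGl : Nat.gcd l ((m - (a - t * m)) + (a - t * m) - l) ∣ l := Nat.gcd_dvd_left _ _
      have hGw : Nat.gcd l ((m - (a - t * m)) + (a - t * m) - l) ∣
          ((m - (a - t * m)) + (a - t * m) - l) := Nat.gcd_dvd_right _ _
      have hGpos : 0 < Nat.gcd l ((m - (a - t * m)) + (a - t * m) - l) :=
        Nat.gcd_pos_of_pos_left _ (by omega)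
      have hGle : Nat.gcd l ((m - (a - t * m)) + (a - t * m) - l) ≤ l :=
        Nat.gcd_le_left _ (by omega)
      have hsum : (l / Nat.gcd l ((m - (a - t * m)) + (a - t * m) - l) +
          ((m - (a - t * m)) + (a - t * m) - l) /
            Nat.gcd l ((m - (a - t * m)) + (a - t * m) - l)) *
          Nat.gcd l ((m - (a - t * m)) + (a - t * m) - l) = m := by
        rw [Nat.add_mul, Nat.div_mul_cancel hGl, Nat.div_mul_cancel hGw]
        omega
      have hxwT : ∀ (T : ℕ) (J : ℕ → Fin n), Zv w T J = mu *
          ZP x (((m - (a - t * m)) + (a - t * m) - l) /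
            Nat.gcd l ((m - (a - t * m)) + (a - t * m) - l)) T J := by
        intro T J
        have hh := hxw (fun i => J (T + i))
        rw [Zv_shift, ZP_shift] at hh
        rw [Zv_off w (show T = T + 0 by omega) J, ZP_off x rfl (show T = T + 0 by omega) J]
        exact hh
      refine ⟨Nat.gcd l ((m - (a - t * m)) + (a - t * m) - l),
        l / Nat.gcd l ((m - (a - t * m)) + (a - t * m) - l) +
          ((m - (a - t * m)) + (a - t * m) - l) /
            Nat.gcd l ((m - (a - t * m)) + (a - t * m) - l),
        x, lam * mu, hGpos, hx0, mul_ne_zero hlam0 hmu0, ?_, hsum, ?_⟩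
      · set P2 := l / Nat.gcd l ((m - (a - t * m)) + (a - t * m) - l) +
            ((m - (a - t * m)) + (a - t * m) - l) /
              Nat.gcd l ((m - (a - t * m)) + (a - t * m) - l) with hP2def
        clear_value P2
        have h0' : P2 ≠ 0 := by
          intro h00
          rw [h00, Nat.zero_mul] at hsum
          omega
        have h1' : P2 ≠ 1 := by
          intro h11
          rw [h11, Nat.one_mul] at hsum
          omega
        omega
      · intro J
        rw [hwa J, hxy J, hxwT l J,
          ZP_off x rfl (show l = (l / Nat.gcd l ((m - (a - t * m)) + (a - t * m) - l)) *
            Nat.gcd l ((m - (a - t * m)) + (a - t * m) - l) from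
            (Nat.div_mul_cancel hGl).symm) J, ← ZP_glue x rfl J]
        ring
  -- FINAL ASSEMBLY
  obtain ⟨G, p', x, c, hGpos, hx0, hc0, hp2, hpG, hzx⟩ := PK
  have hdm2 := Nat.div_add_mod (m - (a - t * m)) G
  have hmc2 : G * ((m - (a - t * m)) / G) = ((m - (a - t * m)) / G) * G := Nat.mul_comm _ _
  have hmod2 := Nat.mod_lt (m - (a - t * m)) hGpos
  set cB := (m - (a - t * m)) / G with hcBdef
  have hcBle : cB * G ≤ m - (a - t * m) := by omega
  have hcBp' : cB ≤ p' := by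
    have h9 : cB * G ≤ p' * G := by omega
    exact Nat.le_of_mul_le_mul_right h9 hGpos
  -- Levi : B = x^{⊗cB} ⊗ x₁
  have hg5 : ∀ J, Zv B 0 J * Zv A (m - (a - t * m)) J =
      Zv (tpowV x cB) 0 J * Zv (c • tpowV x (p' - cB)) (cB * G) J := by
    intro J
    rw [Zv_tpowV, Zv_smul, Zv_tpowV]
    refine Eq.symm ?_
    calc ZP x cB 0 J * (c * ZP x (p' - cB) (cB * G) J)
        = c * (ZP x cB 0 J * ZP x (p' - cB) (cB * G) J) := by ring
      _ = c * ZP x p' 0 J := by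
          rw [ZP_glue x rfl J, ZP_off x (show cB + (p' - cB) = p' by omega) rfl J]
      _ = Zv (tensV B A) 0 J := (hzx J).symm
      _ = Zv B 0 J * Zv A (m - (a - t * m)) J := by
          rw [Zv_tensV, Zv_off A (show 0 + (m - (a - t * m)) = m - (a - t * m) by omega) J]
  obtain ⟨x₁, hx10, hxa5, hxb5⟩ := levi B A (tpowV x cB) (c • tpowV x (p' - cB))
    hcBle hB0 hA0 (tpow_ne_zero (by omega) hx0 cB) hg5
  -- x₁ : Vnm n ((m - (a - t*m)) - cB * G)
  by_cases hr0 : a - t * m = 0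
  · -- degenerate case : a is a multiple of m
    have hcBp : cB = p' := by
      have h10 : m - (a - t * m) = m := by omega
      rw [hcBdef, h10, ← hpG, Nat.mul_div_cancel _ hGpos]
    have hx1deg : (m - (a - t * m)) - cB * G = 0 := by
      have e : cB * G = p' * G := by rw [hcBp]
      omega
    apply periodic_of_scaled_pow hz hp2 hpG x
      (Zv A 0 (fun _ => dflt) * Zv x₁ 0 (fun _ => dflt))
    intro J
    rw [hB1 J, Zv_off B (show (a - t * m) = 0 from hr0) J, hxa5 J, Zv_tpowV,
      Zv_degzero (show a - t * m = 0 from hr0) A 0 0 J (fun _ => dflt),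
      Zv_degzero hx1deg x₁ (cB * G) 0 J (fun _ => dflt),
      ZP_off x hcBp rfl J]
    ring
  · -- main case
    have hcBlt : cB < p' := by
      have h9 : cB * G < p' * G := by omega
      exact Nat.lt_of_mul_lt_mul_right h9
    have he'le : (m - (a - t * m)) - cB * G ≤ G := by omega
    have hcBG1 : cB * G + G ≤ p' * G := by
      have h11 : (cB + 1) * G ≤ p' * G := Nat.mul_le_mul_right G hcBlt
      rw [Nat.add_mul, Nat.one_mul] at h11
      exact h11
    have hxb5x : ∀ J, c * ZP x (p' - cB) 0 J =
        Zv x₁ 0 J * Zv A ((m - (a - t * m)) - cB * G) J := by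
      intro J
      have hh := hxb5 J
      rwa [Zv_smul, Zv_tpowV] at hh
    have hg6 : ∀ J, Zv x 0 J * Zv (c • tpowV x (p' - cB - 1)) G J =
        Zv x₁ 0 J * Zv A ((m - (a - t * m)) - cB * G) J := by
      intro J
      rw [Zv_smul, Zv_tpowV, ← hxb5x J,
        ZP_off x (show p' - cB = (p' - cB - 1) + 1 by omega) rfl J, ZP_succ_front,
        ZP_off x rfl (show 0 + G = G by omega) J]
      ring
    obtain ⟨x₂, hx20, hxa6, hxb6⟩ := levi x (c • tpowV x (p' - cB - 1)) x₁ A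
      he'le hx0 (smul_ne_zero hc0 (tpow_ne_zero (by omega) hx0 _)) hx10 hg6
    -- x₂ : Vnm n (G - ((m - (a - t*m)) - cB * G))
    have hxa6T : ∀ (T : ℕ) (J : ℕ → Fin n), Zv x T J =
        Zv x₁ T J * Zv x₂ (T + ((m - (a - t * m)) - cB * G)) J := by
      intro T J
      have hh := hxa6 (fun i => J (T + i))
      rw [Zv_shift, Zv_shift, Zv_shift] at hh
      rw [Zv_off x (show T = T + 0 by omega) J, Zv_off x₁ (show T = T + 0 by omega) J]
      exact hh
    have hxa5T : ∀ (T : ℕ) (J : ℕ → Fin n), Zv B T J =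
        ZP x cB T J * Zv x₁ (T + cB * G) J := by
      intro T J
      have hh := hxa5 (fun i => J (T + i))
      rw [Zv_tpowV, Zv_shift, ZP_shift, Zv_shift] at hh
      rw [Zv_off B (show T = T + 0 by omega) J, ZP_off x rfl (show T = T + 0 by omega) J]
      exact hh
    have hxb6x : ∀ J, Zv A 0 J = c * (Zv x₂ 0 J *
        ZP x (p' - cB - 1) (G - ((m - (a - t * m)) - cB * G)) J) := by
      intro J
      have hh := hxb6 J
      rw [Zv_smul, Zv_tpowV] at hh
      rw [hh]
      ring
    -- finish
    apply periodic_of_scaled_pow hz hp2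
      (show p' * ((G - ((m - (a - t * m)) - cB * G)) + ((m - (a - t * m)) - cB * G)) = m from by
        rw [show (G - ((m - (a - t * m)) - cB * G)) + ((m - (a - t * m)) - cB * G) = G from by omega]
        exact hpG)
      (tensV x₂ x₁) c
    intro J
    have hoff6 : a - t * m = (G - ((m - (a - t * m)) - cB * G)) + (p' - cB - 1) * G := by
      have e1 : (p' - cB - 1) * G = p' * G - cB * G - G := by
        rw [Nat.sub_mul, Nat.sub_mul, Nat.one_mul]
      omega
    have hoffx1 : (a - t * m) + cB * G =
        (G - ((m - (a - t * m)) - cB * G)) + (p' - 1) * G := by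
      have e1 : (p' - 1) * G = p' * G - G := by rw [Nat.sub_mul, Nat.one_mul]
      omega
    have step3 : Zv z 0 J = c * ((Zv x₂ 0 J *
        ZP x (p' - 1) (G - ((m - (a - t * m)) - cB * G)) J) *
        Zv x₁ ((G - ((m - (a - t * m)) - cB * G)) + (p' - 1) * G) J) := by
      rw [hB1 J, hxb6x J, hxa5T (a - t * m) J, ZP_off x rfl hoff6 J, Zv_off x₁ hoffx1 J]
      rw [show ZP x (p' - 1) (G - ((m - (a - t * m)) - cB * G)) J =
          ZP x (p' - cB - 1) (G - ((m - (a - t * m)) - cB * G)) J *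
          ZP x cB ((G - ((m - (a - t * m)) - cB * G)) + (p' - cB - 1) * G) J from by
        rw [← ZP_add x (p' - cB - 1) cB (G - ((m - (a - t * m)) - cB * G)) J]
        exact ZP_off x (by omega) rfl J]
      ring
    have hr := regroup x₁ x₂ x (by omega) (p' - 1) hxa6T J
    rw [show p' - 1 + 1 = p' from by omega] at hr
    rw [step3, ← hr]
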